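/- Let t, x, s, α ∈ ℂ with Im(t) > 0, Re(x) > 0, Re(α) < 0, and Re(s+α) > 0. Then the function u ↦ u^(−α−1) L(t, x+u, s) is integrable on (0, ∞), and (1/Γ(−α)) ∫_0^∞ u^(−α−1) L(t, x+u, s) du = (Γ(s+α)/Γ(s)) · L(t, x, s+α). -/

import Mathlib

set_option maxHeartbeats 1000000

open MeasureTheory

open Set Complex Filter

lemma int_rpow_exp_real {A R : ℝ} (hA : 0 < A) (hR : 0 < R) :
    IntegrableOn (fun t : ℝ => t ^ (A - 1) * Real.exp (-(R * t))) (Ioi 0) := by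
  have h := Real.GammaIntegral_convergent hA
  rw [← mul_zero R, ← integrableOn_Ioi_comp_mul_left_iff _ _ hR] at h
  refine IntegrableOn.congr_fun (h.const_mul (R ^ (A - 1))⁻¹) (fun t ht => ?_) measurableSet_Ioi
  rw [mem_Ioi] at ht
  rw [Real.mul_rpow hR.le ht.le]
  field_simp

lemma aesm_cpow_exp (a c : ℂ) :
    AEStronglyMeasurable (fun t : ℝ => (t : ℂ) ^ (a - 1) * Complex.exp (-(c * t)))
      (volume.restrict (Ioi 0)) := by
  refine (ContinuousOn.mul ?_ ?_).aestronglyMeasurable measurableSet_Ioi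
  · intro t ht
    refine ((continuousAt_cpow_const ?_).comp Complex.continuous_ofReal.continuousAt).continuousWithinAt
    exact Complex.mem_slitPlane_iff.2 (Or.inl (by exact_mod_cast ht))
  · exact (Complex.continuous_exp.comp (by continuity)).continuousOn

lemma norm_cpow_exp {a c : ℂ} {t : ℝ} (ht : 0 < t) :
    ‖(t : ℂ) ^ (a - 1) * Complex.exp (-(c * t))‖ = t ^ (a.re - 1) * Real.exp (-(c.re * t)) := by
  rw [norm_mul, Complex.norm_exp,
    Complex.norm_cpow_eq_rpow_re_of_pos ht]
  simp [Complex.sub_re]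

lemma int_cpow_exp {a c : ℂ} (ha : 0 < a.re) (hc : 0 < c.re) :
    IntegrableOn (fun t : ℝ => (t : ℂ) ^ (a - 1) * Complex.exp (-(c * t))) (Ioi 0) := by
  refine Integrable.mono' (int_rpow_exp_real ha hc) (aesm_cpow_exp a c) ?_
  filter_upwards [ae_restrict_mem measurableSet_Ioi] with t ht
  rw [norm_cpow_exp ht]

lemma hasDerivAt_gamma_int {a : ℂ} (ha : 0 < a.re) {c₀ : ℂ} (hc₀ : 0 < c₀.re) :
    HasDerivAt (fun c : ℂ => ∫ t : ℝ in Ioi 0, (t : ℂ) ^ (a - 1) * Complex.exp (-(c * t)))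
      (∫ t : ℝ in Ioi 0, -(t : ℂ) * ((t : ℂ) ^ (a - 1) * Complex.exp (-(c₀ * t)))) c₀ := by
  set ε := c₀.re / 2 with hε
  have hεpos : 0 < ε := by positivity
  refine (hasDerivAt_integral_of_dominated_loc_of_deriv_le (F := fun (c : ℂ) (t : ℝ) =>
      (t : ℂ) ^ (a - 1) * Complex.exp (-(c * t)))
      (F' := fun (c : ℂ) (t : ℝ) => -(t : ℂ) * ((t : ℂ) ^ (a - 1) * Complex.exp (-(c * t))))
      (bound := fun t : ℝ => t ^ (a.re + 1 - 1) * Real.exp (-(ε * t)))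
      (Metric.ball_mem_nhds c₀ hεpos) (Eventually.of_forall fun c => aesm_cpow_exp a c) (int_cpow_exp ha hc₀)
      ?_ ?_ ?_ ?_).2
  · exact (Complex.continuous_ofReal.neg.aestronglyMeasurable).mul (aesm_cpow_exp a c₀)
  · filter_upwards [ae_restrict_mem measurableSet_Ioi] with t ht c hc
    rw [mem_Ioi] at ht
    rw [norm_mul, norm_cpow_exp ht, norm_neg, Complex.norm_real, Real.norm_eq_abs,
      abs_of_pos ht]
    have h1 : t * (t ^ (a.re - 1) * Real.exp (-(c.re * t)))
        = t ^ (a.re + 1 - 1) * Real.exp (-(c.re * t)) := by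
      rw [show a.re + 1 - 1 = (a.re - 1) + 1 by ring, Real.rpow_add ht, Real.rpow_one]; ring
    rw [h1]
    have h2 : ε ≤ c.re := by
      have h0 := Complex.abs_re_le_norm (c - c₀)
      rw [Metric.mem_ball, Complex.dist_eq] at hc
      have : |(c - c₀).re| < ε := lt_of_le_of_lt h0 hc
      rw [Complex.sub_re, abs_lt] at this
      simp only [hε] at *
      linarith
    have : Real.exp (-(c.re * t)) ≤ Real.exp (-(ε * t)) := by
      apply Real.exp_le_exp.2; nlinarith
    have hnn : 0 ≤ t ^ (a.re + 1 - 1) := Real.rpow_nonneg ht.le _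
    nlinarith [Real.exp_pos (-(c.re * t)), Real.rpow_pos_of_pos ht (a.re + 1 - 1)]
  · exact int_rpow_exp_real (by linarith) hεpos
  · filter_upwards with t
    intro c _
    have h : HasDerivAt (fun c : ℂ => -(c * t)) (-(t : ℂ)) c := by
      have h0 : HasDerivAt (fun y : ℂ => -(y * (t:ℂ))) (-(1 * (t:ℂ))) c :=
        ((hasDerivAt_id c).mul_const (t : ℂ)).neg
      simpa using h0
    have := (h.cexp).const_mul ((t : ℂ) ^ (a - 1))
    exact this.congr_deriv (by ring)

lemma gamma_integral_complex_rate {a c : ℂ} (ha : 0 < a.re) (hc : 0 < c.re) :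
    ∫ t : ℝ in Ioi 0, (t : ℂ) ^ (a - 1) * Complex.exp (-(c * t))
      = Complex.Gamma a * c ^ (-a) := by
  set U : Set ℂ := {z | 0 < z.re} with hU
  have hUopen : IsOpen U := isOpen_lt continuous_const Complex.continuous_re
  have hUconn : IsPreconnected U := (convex_halfSpace_re_gt 0).isPreconnected
  set f : ℂ → ℂ := fun c => ∫ t : ℝ in Ioi 0, (t : ℂ) ^ (a - 1) * Complex.exp (-(c * t)) with hf
  set g : ℂ → ℂ := fun c => Complex.Gamma a * c ^ (-a) with hg
  have hfa : AnalyticOnNhd ℂ f U := by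
    refine DifferentiableOn.analyticOnNhd (fun z hz => ?_) hUopen
    exact (hasDerivAt_gamma_int ha hz).differentiableAt.differentiableWithinAt
  have hga : AnalyticOnNhd ℂ g U := by
    refine DifferentiableOn.analyticOnNhd (fun z hz => ?_) hUopen
    refine DifferentiableAt.differentiableWithinAt ?_
    exact (differentiableAt_id.cpow (differentiableAt_const _)
      (Complex.mem_slitPlane_iff.2 (Or.inl hz))).const_mul _
  have hreal : ∀ r : ℝ, 0 < r → f r = g r := by
    intro r hr
    rw [hf, hg]
    simp only
    have := Complex.integral_cpow_mul_exp_neg_mul_Ioi ha hr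
    simp_rw [show ∀ t : ℝ, ((r : ℂ) * t) = ((r * t : ℝ) : ℂ) by intro t; push_cast; ring] at *
    have harg : Complex.arg (r : ℂ) ≠ Real.pi := by
      rw [Complex.arg_ofReal_of_nonneg hr.le]
      exact Real.pi_ne_zero.symm
    rw [this, one_div, Complex.inv_cpow _ _ harg, ← Complex.cpow_neg]
    ring
  have key : EqOn f g U := by
    refine AnalyticOnNhd.eqOn_of_preconnected_of_frequently_eq hfa hga hUconn
      (show (1 : ℂ) ∈ U by simp [hU]) ?_
    have hseq : Tendsto (fun n : ℕ => ((1 + (n + 1 : ℝ)⁻¹ : ℝ) : ℂ)) atTop (nhdsWithin 1 {(1:ℂ)}ᶜ) := by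
      rw [tendsto_nhdsWithin_iff]
      constructor
      · have : Tendsto (fun n : ℕ => (1 + (n + 1 : ℝ)⁻¹ : ℝ)) atTop (nhds 1) := by
          have := tendsto_one_div_add_atTop_nhds_zero_nat (𝕜 := ℝ)
          simpa [one_div] using tendsto_const_nhds.add this
        have h2 := (Complex.continuous_ofReal.tendsto 1).comp this
        rw [show ((1:ℝ):ℂ) = 1 from rfl] at h2
        exact h2
      · filter_upwards with n
        simp only [mem_compl_iff, mem_singleton_iff]
        intro h
        have : (1 + (n + 1 : ℝ)⁻¹ : ℝ) = 1 := by exact_mod_cast h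
        have hpos : (0:ℝ) < (n + 1 : ℝ)⁻¹ := by positivity
        linarith
    refine hseq.frequently (Frequently.of_forall fun n => ?_)
    exact hreal _ (by positivity)
  exact key (show c ∈ U from hc)

lemma int_rpow_shift {A S r : ℝ} (hA : 0 < A) (hAS : A < S) (hr : 0 < r) :
    IntegrableOn (fun u : ℝ => u ^ (A - 1) * (r + u) ^ (-S)) (Ioi 0) := by
  have hS : 0 < S := hA.trans hAS
  have hIoi : (Ioi (0:ℝ)) = Ioc 0 1 ∪ Ioi 1 := by
    rw [Ioc_union_Ioi_eq_Ioi]; norm_num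
  rw [hIoi]
  have hcont : ContinuousOn (fun u : ℝ => u ^ (A - 1) * (r + u) ^ (-S)) (Ioi 0) := by
    apply ContinuousOn.mul
    · exact (continuousOn_id).rpow_const (fun x hx => Or.inl (ne_of_gt hx))
    · exact (continuousOn_const.add continuousOn_id).rpow_const
        (fun x hx => Or.inl (by have : (0:ℝ) < x := hx; exact (show (0:ℝ) < r + x by positivity).ne'))
  apply IntegrableOn.union
  · refine Integrable.mono' (g := fun u : ℝ => r ^ (-S) * u ^ (A - 1)) ?_ ?_ ?_
    · have : IntervalIntegrable (fun u : ℝ => u ^ (A - 1)) volume 0 1 :=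
        intervalIntegral.intervalIntegrable_rpow' (by linarith)
      rw [intervalIntegrable_iff_integrableOn_Ioc_of_le (by norm_num)] at this
      exact this.const_mul _
    · exact (hcont.mono (fun x hx => hx.1)).aestronglyMeasurable measurableSet_Ioc
    · filter_upwards [ae_restrict_mem measurableSet_Ioc] with u hu
      have hu0 : 0 < u := hu.1
      rw [Real.norm_eq_abs, _root_.abs_of_nonneg (by positivity)]
      rw [mul_comm (r ^ (-S))]
      apply mul_le_mul_of_nonneg_left _ (by positivity)
      exact Real.rpow_le_rpow_of_nonpos hr (by linarith) (by linarith)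
  · refine Integrable.mono' (g := fun u : ℝ => u ^ (A - 1 - S)) ?_ ?_ ?_
    · exact integrableOn_Ioi_rpow_of_lt (by linarith) one_pos
    · exact (hcont.mono (fun x (hx : x ∈ Ioi (1:ℝ)) => mem_Ioi.2 (lt_trans (one_pos : (0:ℝ) < 1) (mem_Ioi.1 hx)))).aestronglyMeasurable
        measurableSet_Ioi
    · filter_upwards [ae_restrict_mem measurableSet_Ioi] with u hu
      have hu0 : (0:ℝ) < u := lt_trans one_pos hu
      rw [Real.norm_eq_abs, _root_.abs_of_nonneg (by positivity)]
      have h1 : (r + u) ^ (-S) ≤ u ^ (-S) :=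
        Real.rpow_le_rpow_of_nonpos hu0 (by linarith) (by linarith)
      calc u ^ (A - 1) * (r + u) ^ (-S) ≤ u ^ (A - 1) * u ^ (-S) :=
            mul_le_mul_of_nonneg_left h1 (by positivity)
        _ = u ^ (A - 1 - S) := by
            rw [← Real.rpow_add hu0]; ring_nf

lemma norm_cpow_shift {a s c : ℂ} (hc : 0 < c.re) (hs : 0 < s.re) {u : ℝ} (hu : 0 < u) :
    ‖(u : ℂ) ^ (a - 1) * (c + u) ^ (-s)‖
      ≤ Real.exp (|s.im| * (Real.pi / 2)) * (u ^ (a.re - 1) * (c.re + u) ^ (-s.re)) := by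
  have hz : (c + (u:ℂ)) ≠ 0 := by
    intro h
    have : (c + (u:ℂ)).re = 0 := by rw [h]; simp
    simp only [Complex.add_re, Complex.ofReal_re] at this
    linarith
  have hzre : 0 < (c + (u:ℂ)).re := by
    simp only [Complex.add_re, Complex.ofReal_re]; linarith
  rw [norm_mul,
    Complex.norm_cpow_eq_rpow_re_of_pos hu, Complex.norm_cpow_of_ne_zero hz]
  have h1 : ‖c + (u:ℂ)‖ ^ (-s).re ≤ (c.re + u) ^ (-s.re) := by
    rw [Complex.neg_re]
    refine Real.rpow_le_rpow_of_nonpos (by linarith) ?_ (by linarith)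
    calc c.re + u = (c + (u:ℂ)).re := by simp
      _ ≤ ‖c + (u:ℂ)‖ := Complex.re_le_norm _
  have h2 : (Real.exp ((c + (u:ℂ)).arg * (-s).im))⁻¹ ≤ Real.exp (|s.im| * (Real.pi / 2)) := by
    rw [← Real.exp_neg]
    apply Real.exp_le_exp.2
    have harg : |(c + (u:ℂ)).arg| ≤ Real.pi / 2 :=
      Complex.abs_arg_le_pi_div_two_iff.2 hzre.le
    calc -((c + (u:ℂ)).arg * (-s).im) = (c + (u:ℂ)).arg * s.im := by
          simp [Complex.neg_im]
      _ ≤ |(c + (u:ℂ)).arg * s.im| := le_abs_self _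
      _ = |(c + (u:ℂ)).arg| * |s.im| := abs_mul _ _
      _ ≤ (Real.pi / 2) * |s.im| := by
          apply mul_le_mul_of_nonneg_right harg (abs_nonneg _)
      _ = |s.im| * (Real.pi / 2) := mul_comm _ _
  rw [div_eq_mul_inv]
  have hnn1 : (0:ℝ) ≤ u ^ (a.re - 1) := Real.rpow_nonneg hu.le _
  have hnn2 : (0:ℝ) ≤ ‖c + (u:ℂ)‖ ^ (-s).re := Real.rpow_nonneg (norm_nonneg _) _
  have := mul_le_mul h1 h2 (le_of_lt (by positivity)) (by positivity)
  calc u ^ (a.re - 1) * (‖c + (u:ℂ)‖ ^ (-s).re * (Real.exp ((c + (u:ℂ)).arg * (-s).im))⁻¹)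
      ≤ u ^ (a.re - 1) * ((c.re + u) ^ (-s.re) * Real.exp (|s.im| * (Real.pi / 2))) := by
        apply mul_le_mul_of_nonneg_left _ hnn1
        exact this
    _ = Real.exp (|s.im| * (Real.pi / 2)) * (u ^ (a.re - 1) * (c.re + u) ^ (-s.re)) := by ring

lemma aesm_cpow_shift (a s c : ℂ) (hc : 0 < c.re) :
    AEStronglyMeasurable (fun u : ℝ => (u : ℂ) ^ (a - 1) * (c + u) ^ (-s))
      (volume.restrict (Ioi 0)) := by
  refine (ContinuousOn.mul ?_ ?_).aestronglyMeasurable measurableSet_Ioi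
  · intro u hu
    exact ((continuousAt_cpow_const (Complex.mem_slitPlane_iff.2 (Or.inl (by exact_mod_cast hu)))).comp
      Complex.continuous_ofReal.continuousAt).continuousWithinAt
  · intro u hu
    have hmem : (c + (u:ℂ)) ∈ Complex.slitPlane := by
      refine Complex.mem_slitPlane_iff.2 (Or.inl ?_)
      simp only [Complex.add_re, Complex.ofReal_re]
      have : (0:ℝ) < u := hu
      linarith
    have hca : ContinuousAt (fun u : ℝ => c + (u:ℂ)) u :=
      (continuous_const.add Complex.continuous_ofReal).continuousAt
    exact (ContinuousAt.cpow hca continuousAt_const hmem).continuousWithinAt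

lemma betaIoi_integrable {a s c : ℂ} (ha : 0 < a.re) (has : a.re < s.re) (hc : 0 < c.re) :
    IntegrableOn (fun u : ℝ => (u : ℂ) ^ (a - 1) * (c + u) ^ (-s)) (Ioi 0) := by
  have hs : 0 < s.re := ha.trans has
  refine Integrable.mono'
    ((int_rpow_shift ha has hc).const_mul (Real.exp (|s.im| * (Real.pi / 2))))
    (aesm_cpow_shift a s c hc) ?_
  filter_upwards [ae_restrict_mem measurableSet_Ioi] with u hu
  exact norm_cpow_shift hc hs hu

lemma gamma_s_ne_zero {s : ℂ} (hs : 0 < s.re) : Complex.Gamma s ≠ 0 := by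
  apply Complex.Gamma_ne_zero
  intro m h
  rw [h] at hs
  simp only [Complex.neg_re, Complex.natCast_re] at hs
  have : (0:ℝ) ≤ m := Nat.cast_nonneg m
  linarith

lemma betaIoi {a s c : ℂ} (ha : 0 < a.re) (has : a.re < s.re) (hc : 0 < c.re) :
    ∫ u : ℝ in Ioi 0, (u : ℂ) ^ (a - 1) * (c + u) ^ (-s)
      = Complex.Gamma a * Complex.Gamma (s - a) / Complex.Gamma s * c ^ (a - s) := by
  have hs : 0 < s.re := ha.trans has
  have haesm : AEStronglyMeasurable
      (Function.uncurry (fun u y : ℝ =>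
        (u : ℂ) ^ (a - 1) * ((y : ℂ) ^ (s - 1) * Complex.exp (-((c + u) * y)))))
      ((volume.restrict (Ioi 0)).prod (volume.restrict (Ioi 0))) := by
    rw [Measure.prod_restrict]
    refine ContinuousOn.aestronglyMeasurable ?_ (measurableSet_Ioi.prod measurableSet_Ioi)
    apply ContinuousOn.mul
    · intro p hp
      have h1 : (0:ℝ) < p.1 := hp.1
      exact ((continuousAt_cpow_const (Complex.mem_slitPlane_iff.2 (Or.inl (by exact_mod_cast h1)))).comp
        (Complex.continuous_ofReal.continuousAt.comp continuousAt_fst)).continuousWithinAt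
    · apply ContinuousOn.mul
      · intro p hp
        have h2 : (0:ℝ) < p.2 := hp.2
        exact ((continuousAt_cpow_const (Complex.mem_slitPlane_iff.2 (Or.inl (by exact_mod_cast h2)))).comp
          (Complex.continuous_ofReal.continuousAt.comp continuousAt_snd)).continuousWithinAt
      · exact (Complex.continuous_exp.comp (by fun_prop)).continuousOn
  have hInt : Integrable
      (Function.uncurry (fun u y : ℝ =>
        (u : ℂ) ^ (a - 1) * ((y : ℂ) ^ (s - 1) * Complex.exp (-((c + u) * y)))))
      ((volume.restrict (Ioi 0)).prod (volume.restrict (Ioi 0))) := by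
    rw [integrable_prod_iff haesm]
    constructor
    · filter_upwards [ae_restrict_mem measurableSet_Ioi] with u hu
      have hcre : 0 < (c + (u:ℂ)).re := by
        simp only [Complex.add_re, Complex.ofReal_re]
        have : (0:ℝ) < u := hu
        linarith
      simp only [Function.uncurry_apply_pair]
      exact ((int_cpow_exp hs hcre).const_mul _)
    · -- integrable of u ↦ ∫ y, ‖f u y‖
      simp only [Function.uncurry_apply_pair]
      have key : ∀ u : ℝ, u ∈ Ioi (0:ℝ) →
          (∫ y : ℝ in Ioi 0, ‖(u : ℂ) ^ (a - 1) * ((y : ℂ) ^ (s - 1) * Complex.exp (-((c + u) * y)))‖)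
          = Real.Gamma s.re * (u ^ (a.re - 1) * (c.re + u) ^ (-s.re)) := by
        intro u hu
        have hu0 : (0:ℝ) < u := hu
        have hR : 0 < c.re + u := by linarith
        have h1 : (∫ y : ℝ in Ioi 0, ‖(u : ℂ) ^ (a - 1) * ((y : ℂ) ^ (s - 1) * Complex.exp (-((c + u) * y)))‖)
            = ∫ y in Ioi (0:ℝ), u ^ (a.re - 1) * (y ^ (s.re - 1) * Real.exp (-((c.re + u) * y))) := by
          refine setIntegral_congr_fun measurableSet_Ioi (fun y hy => ?_)
          have hy0 : (0:ℝ) < y := hy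
          simp only [norm_mul]
          rw [Complex.norm_cpow_eq_rpow_re_of_pos hu0,
            Complex.norm_cpow_eq_rpow_re_of_pos hy0,
            Complex.norm_exp]
          congr 2
          all_goals
            simp [Complex.sub_re, Complex.neg_re, Complex.add_re, Complex.mul_re,
              Complex.ofReal_re, Complex.ofReal_im]
          all_goals try ring
        rw [h1, integral_const_mul, Real.integral_rpow_mul_exp_neg_mul_Ioi hs hR]
        rw [one_div, Real.inv_rpow hR.le, ← Real.rpow_neg hR.le]
        ring
      refine Integrable.congr (((int_rpow_shift ha has hc).const_mul (Real.Gamma s.re))) ?_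
      filter_upwards [ae_restrict_mem measurableSet_Ioi] with u hu
      exact (key u hu).symm
  have hswap := MeasureTheory.integral_integral_swap hInt
  have step1 : (∫ u : ℝ in Ioi 0, (∫ y : ℝ in Ioi 0,
        (u : ℂ) ^ (a - 1) * ((y : ℂ) ^ (s - 1) * Complex.exp (-((c + u) * y)))))
      = Complex.Gamma s * ∫ u : ℝ in Ioi 0, (u : ℂ) ^ (a - 1) * (c + u) ^ (-s) := by
    rw [← integral_const_mul]
    refine setIntegral_congr_fun measurableSet_Ioi (fun u hu => ?_)
    have hu0 : (0:ℝ) < u := hu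
    have hcre : 0 < (c + (u:ℂ)).re := by
      simp only [Complex.add_re, Complex.ofReal_re]; linarith
    rw [integral_const_mul, gamma_integral_complex_rate hs hcre]
    ring
  have step2 : (∫ y : ℝ in Ioi 0, (∫ u : ℝ in Ioi 0,
        (u : ℂ) ^ (a - 1) * ((y : ℂ) ^ (s - 1) * Complex.exp (-((c + u) * y)))))
      = Complex.Gamma a * (Complex.Gamma (s - a) * c ^ (-(s - a))) := by
    have h2 : (∫ y : ℝ in Ioi 0, (∫ u : ℝ in Ioi 0,
          (u : ℂ) ^ (a - 1) * ((y : ℂ) ^ (s - 1) * Complex.exp (-((c + u) * y)))))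
        = ∫ y in Ioi (0:ℝ), Complex.Gamma a * ((y:ℂ) ^ ((s - a) - 1) * Complex.exp (-(c * y))) := by
      refine setIntegral_congr_fun measurableSet_Ioi (fun y hy => ?_)
      have hy0 : (0:ℝ) < y := hy
      have hyne : ((y:ℝ):ℂ) ≠ 0 := Complex.ofReal_ne_zero.2 hy0.ne'
      have inner : (∫ u : ℝ in Ioi 0,
            (u : ℂ) ^ (a - 1) * ((y : ℂ) ^ (s - 1) * Complex.exp (-((c + u) * y))))
          = ∫ u in Ioi (0:ℝ), ((y:ℂ) ^ (s - 1) * Complex.exp (-(c * y)))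
              * ((u : ℂ) ^ (a - 1) * Complex.exp (-((y:ℂ) * u))) := by
        refine setIntegral_congr_fun measurableSet_Ioi (fun u hu => ?_)
        rw [show -((c + (u:ℂ)) * (y:ℂ)) = -(c * y) + -((y:ℂ) * u) by ring, Complex.exp_add]
        ring
      rw [inner, integral_const_mul,
        gamma_integral_complex_rate ha (show (0:ℝ) < ((y:ℝ):ℂ).re by simpa using hy0)]
      rw [show ((y:ℂ) ^ (s - 1) * Complex.exp (-(c * y)) * (Complex.Gamma a * (y:ℂ) ^ (-a)))
          = Complex.Gamma a * ((y:ℂ) ^ (s - 1) * (y:ℂ) ^ (-a) * Complex.exp (-(c * y))) by ring]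
      rw [← Complex.cpow_add _ _ hyne]
      ring_nf
    rw [h2, integral_const_mul,
      gamma_integral_complex_rate (show 0 < (s - a).re by simp [Complex.sub_re]; linarith) hc]
  have hfinal : Complex.Gamma s * (∫ u : ℝ in Ioi 0, (u : ℂ) ^ (a - 1) * (c + u) ^ (-s))
      = Complex.Gamma a * (Complex.Gamma (s - a) * c ^ (-(s - a))) := by
    rw [← step1, ← step2]
    exact hswap
  have hFs : Complex.Gamma s ≠ 0 := gamma_s_ne_zero hs
  rw [show a - s = -(s - a) by ring, div_mul_eq_mul_div, eq_div_iff hFs]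
  linear_combination hfinal

/-- The Lerch zeta function, defined by its (absolutely convergent, for `Im t > 0` and
`Re x > 0`) series, with all complex powers taken with the principal branch. -/
noncomputable def lerchZeta (t x s : ℂ) : ℂ :=
  ∑' m : ℕ, ((m : ℂ) + x) ^ (-s) * Complex.exp (2 * Real.pi * Complex.I * t * m)

lemma norm_em (t : ℂ) (m : ℕ) :
    ‖Complex.exp (2 * Real.pi * Complex.I * t * m)‖
      = Real.exp (-(2 * Real.pi * t.im)) ^ m := by
  rw [Complex.norm_exp, ← Real.exp_nat_mul]
  congr 1
  simp [Complex.mul_re, Complex.mul_im]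
  ring

theorem weyl_fracint_lerch_x (t x s α : ℂ) (ht : 0 < t.im) (hx : 0 < x.re)
    (hα : α.re < 0) (hsα : 0 < (s + α).re) :
    IntegrableOn (fun u : ℝ => (u : ℂ) ^ (-α - 1) * lerchZeta t (x + u) s) (Set.Ioi 0) ∧
    (1 / Complex.Gamma (-α)) *
        (∫ u in Set.Ioi (0 : ℝ), (u : ℂ) ^ (-α - 1) * lerchZeta t (x + u) s)
      = (Complex.Gamma (s + α) / Complex.Gamma s) * lerchZeta t x (s + α) := by
  have ha : 0 < (-α).re := by simp [Complex.neg_re]; linarith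
  have has : (-α).re < s.re := by
    have := hsα
    simp only [Complex.add_re] at this
    simp only [Complex.neg_re]
    linarith
  have hs : 0 < s.re := lt_trans ha has
  set F : ℕ → ℝ → ℂ := fun m u =>
    (u : ℂ) ^ (-α - 1) * (((m : ℂ) + (x + u)) ^ (-s)
      * Complex.exp (2 * Real.pi * Complex.I * t * m)) with hF
  have hFeq : ∀ u : ℝ, (u : ℂ) ^ (-α - 1) * lerchZeta t (x + u) s = ∑' m : ℕ, F m u := by
    intro u
    rw [lerchZeta, ← tsum_mul_left]
  have hcm : ∀ m : ℕ, 0 < (x + (m : ℂ)).re := by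
    intro m
    simp only [Complex.add_re, Complex.natCast_re]
    have : (0:ℝ) ≤ m := Nat.cast_nonneg m
    linarith
  have hFeq2 : ∀ m : ℕ, ∀ u : ℝ,
      F m u = ((u : ℂ) ^ (-α - 1) * ((x + (m : ℂ)) + u) ^ (-s))
        * Complex.exp (2 * Real.pi * Complex.I * t * m) := by
    intro m u
    rw [hF]
    simp only
    rw [show ((m : ℂ) + (x + u)) = ((x + (m : ℂ)) + u) by ring]
    ring
  -- set up constants
  set ρ : ℝ := Real.exp (-(2 * Real.pi * t.im)) with hρdef
  have hρ0 : 0 ≤ ρ := Real.exp_nonneg _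
  have hρ1 : ρ < 1 := by
    rw [hρdef, Real.exp_lt_one_iff]
    have : 0 < Real.pi := Real.pi_pos
    nlinarith
  have hgeo : Summable fun m : ℕ => ρ ^ m := summable_geometric_of_lt_one hρ0 hρ1
  set E : ℝ := Real.exp (|s.im| * (Real.pi / 2)) with hEdef
  have hE0 : 0 ≤ E := Real.exp_nonneg _
  set g : ℝ → ℝ := fun u => u ^ ((-α).re - 1) * (x.re + u) ^ (-s.re) with hg
  have hgint : IntegrableOn g (Ioi 0) := int_rpow_shift ha has hx
  have hgnn : ∀ u : ℝ, 0 < u → 0 ≤ g u := by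
    intro u hu
    rw [hg]
    have := Real.rpow_nonneg hu.le ((-α).re - 1)
    have : (0:ℝ) < x.re + u := by linarith
    positivity
  -- pointwise norm bound
  have hnormF : ∀ m : ℕ, ∀ u : ℝ, 0 < u → ‖F m u‖ ≤ ρ ^ m * (E * g u) := by
    intro m u hu
    rw [hFeq2 m u, norm_mul, norm_em]
    have h1 : ‖(u : ℂ) ^ (-α - 1) * ((x + (m : ℂ)) + u) ^ (-s)‖
        ≤ E * (u ^ ((-α).re - 1) * ((x + (m : ℂ)).re + u) ^ (-s.re)) :=
      norm_cpow_shift (hcm m) hs hu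
    have h2 : ((x + (m : ℂ)).re + u) ^ (-s.re) ≤ (x.re + u) ^ (-s.re) := by
      refine Real.rpow_le_rpow_of_nonpos (by linarith) ?_ (by linarith)
      simp only [Complex.add_re, Complex.natCast_re]
      have : (0:ℝ) ≤ m := Nat.cast_nonneg m
      linarith
    have hr : (0:ℝ) ≤ u ^ ((-α).re - 1) := Real.rpow_nonneg hu.le _
    have h4 : u ^ ((-α).re - 1) * ((x + (m : ℂ)).re + u) ^ (-s.re) ≤ g u :=
      mul_le_mul_of_nonneg_left h2 hr
    have h3 : ‖(u : ℂ) ^ (-α - 1) * ((x + (m : ℂ)) + u) ^ (-s)‖ ≤ E * g u :=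
      le_trans h1 (mul_le_mul_of_nonneg_left h4 hE0)
    calc ‖(u : ℂ) ^ (-α - 1) * ((x + (m : ℂ)) + u) ^ (-s)‖ * ρ ^ m
        ≤ (E * g u) * ρ ^ m := by
          apply mul_le_mul_of_nonneg_right h3 (by positivity)
      _ = ρ ^ m * (E * g u) := by ring
  -- integrability of each F m
  have hFint : ∀ m : ℕ, Integrable (F m) (volume.restrict (Ioi 0)) := by
    intro m
    refine Integrable.mono' ((hgint.const_mul E).const_mul (ρ ^ m)) ?_ ?_
    · refine AEStronglyMeasurable.congr
        ((aesm_cpow_shift (-α) s (x + (m : ℂ)) (hcm m)).mul_const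
          (Complex.exp (2 * Real.pi * Complex.I * t * m))) ?_
      filter_upwards with u
      exact (hFeq2 m u).symm
    · filter_upwards [ae_restrict_mem measurableSet_Ioi] with u hu
      exact hnormF m u hu
  -- summability of integrals of norms
  have hsum_int : Summable fun m : ℕ => ∫ u in Ioi 0, ‖F m u‖ := by
    refine Summable.of_nonneg_of_le (fun m => integral_nonneg fun u => norm_nonneg _)
      (fun m => ?_) (hgeo.mul_right (E * (∫ u in Ioi 0, g u)))
    have hle : (∫ u in Ioi 0, ‖F m u‖) ≤ ∫ u in Ioi 0, ρ ^ m * (E * g u) := by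
      refine integral_mono_of_nonneg (Eventually.of_forall fun u => norm_nonneg _)
        ((hgint.const_mul E).const_mul (ρ ^ m)) ?_
      filter_upwards [ae_restrict_mem measurableSet_Ioi] with u hu
      exact hnormF m u hu
    refine le_trans hle ?_
    rw [integral_const_mul, integral_const_mul]
  have hHasSum := hasSum_integral_of_summable_integral_norm hFint hsum_int
  -- value of each integral
  have hval : ∀ m : ℕ, (∫ u in Ioi 0, F m u)
      = (Complex.Gamma (-α) * Complex.Gamma (s + α) / Complex.Gamma s)
        * (((m : ℂ) + x) ^ (-(s + α)) * Complex.exp (2 * Real.pi * Complex.I * t * m)) := by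
    intro m
    have h1 : (∫ u in Ioi 0, F m u)
        = (∫ u : ℝ in Ioi 0, ((u : ℂ) ^ (-α - 1) * ((x + (m : ℂ)) + u) ^ (-s)))
          * Complex.exp (2 * Real.pi * Complex.I * t * m) := by
      rw [← integral_mul_const]
      exact setIntegral_congr_fun measurableSet_Ioi (fun u hu => hFeq2 m u)
    rw [h1, betaIoi ha has (hcm m), show s - -α = s + α by ring,
      show -α - s = -(s + α) by ring, show x + (m : ℂ) = (m : ℂ) + x by ring]
    ring
  have htsum : ∑' m : ℕ, (∫ u in Ioi 0, F m u)
      = (Complex.Gamma (-α) * Complex.Gamma (s + α) / Complex.Gamma s)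
        * lerchZeta t x (s + α) := by
    rw [lerchZeta, ← tsum_mul_left]
    exact tsum_congr fun m => hval m
  -- pointwise summability
  have hsummandF : ∀ u : ℝ, 0 < u → Summable fun m : ℕ => F m u := by
    intro u hu
    exact Summable.of_norm_bounded (hgeo.mul_right _)
      (fun m => hnormF m u hu)
  have hsummandFnorm : ∀ u : ℝ, 0 < u → Summable fun m : ℕ => ‖F m u‖ := by
    intro u hu
    exact Summable.of_nonneg_of_le (fun m => norm_nonneg _) (fun m => hnormF m u hu)
      (hgeo.mul_right _)
  -- measurability of the tsum
  have haesm_tsum : AEStronglyMeasurable (fun u : ℝ => ∑' m : ℕ, F m u)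
      (volume.restrict (Ioi 0)) := by
    refine aestronglyMeasurable_of_tendsto_ae atTop
      (f := fun n : ℕ => fun u : ℝ => ∑ m ∈ Finset.range n, F m u)
      (fun n => Finset.aestronglyMeasurable_fun_sum _ (fun m _ => (hFint m).1)) ?_
    filter_upwards [ae_restrict_mem measurableSet_Ioi] with u hu
    exact ((hsummandF u hu).hasSum).tendsto_sum_nat
  -- integrability of the tsum
  have hint_tsum : Integrable (fun u : ℝ => ∑' m : ℕ, F m u) (volume.restrict (Ioi 0)) := by
    refine Integrable.mono' ((hgint.const_mul E).const_mul (∑' m : ℕ, ρ ^ m)) haesm_tsum ?_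
    filter_upwards [ae_restrict_mem measurableSet_Ioi] with u hu
    calc ‖∑' m : ℕ, F m u‖ ≤ ∑' m : ℕ, ‖F m u‖ := norm_tsum_le_tsum_norm (hsummandFnorm u hu)
      _ ≤ ∑' m : ℕ, ρ ^ m * (E * g u) :=
          Summable.tsum_le_tsum (fun m => hnormF m u hu) (hsummandFnorm u hu) (hgeo.mul_right _)
      _ = (∑' m : ℕ, ρ ^ m) * (E * g u) := tsum_mul_right
  constructor
  · exact hint_tsum.congr (Eventually.of_forall fun u => (hFeq u).symm)
  · have hIeq : (∫ u : ℝ in Ioi 0, (u : ℂ) ^ (-α - 1) * lerchZeta t (x + u) s)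
        = ∑' m : ℕ, ∫ u : ℝ in Ioi 0, F m u := by
      have : (∫ u : ℝ in Ioi 0, (u : ℂ) ^ (-α - 1) * lerchZeta t (x + u) s)
          = ∫ u : ℝ in Ioi 0, ∑' m : ℕ, F m u :=
        integral_congr_ae (Eventually.of_forall fun u => hFeq u)
      rw [this, ← hHasSum.tsum_eq]
    rw [hIeq, htsum]
    have hΓ1 : Complex.Gamma (-α) ≠ 0 := gamma_s_ne_zero ha
    have hΓ2 : Complex.Gamma s ≠ 0 := gamma_s_ne_zero hs
    field_simp
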